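/- Consider the orthogonal series D_n (N = 2n). Assume |r| = 1, that |q_{ab}| = 1 whenever a and b are both different from n and n+1, and that q_{ab}/r is real whenever at least one of a, b equals n or n+1. Let 𝒟 be the N×N permutation matrix exchanging the indices n and n+1. Then (𝒟 ⊗ 𝒟) R (𝒟 ⊗ 𝒟) = conj(R⁻¹), where R⁻¹ is the matrix inverse of R (equal to R_{q⁻¹,r⁻¹}) and conj denotes entrywise complex conjugation. (This is the identity underlying the *-conjugation defining the real form SO_{q,r}(n+1,n−1), in particular the quantum Lorentz group inside the quantum Poincaré group ISO_{q,r}(3,1).) -/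

import Mathlib

open Finset

/-- The three series `B_n` (N = 2n+1, ε = +1), `C_n` (N = 2n, ε = −1),
`D_n` (N = 2n, ε = +1). -/
inductive BCDSeries : Type
  | B : BCDSeries
  | C : BCDSeries
  | D : BCDSeries
deriving DecidableEq

/-- Kronecker delta with values in `ℂ`. -/
def kd {α : Type*} [DecidableEq α] (a b : α) : ℂ := if a = b then 1 else 0

/-- The dimension `N` of the fundamental representation. -/
def bigN : BCDSeries → ℕ → ℕ
  | BCDSeries.B, n => 2 * n + 1
  | BCDSeries.C, n => 2 * n
  | BCDSeries.D, n => 2 * n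

/-- The sign `ε`: `+1` for the orthogonal series `B_n, D_n`, `−1` for the symplectic
series `C_n`. -/
def epsZ : BCDSeries → ℤ
  | BCDSeries.B => 1
  | BCDSeries.C => -1
  | BCDSeries.D => 1

/-- The sign `ε` as a complex number. -/
noncomputable def epsC (S : BCDSeries) : ℂ := (epsZ S : ℂ)

/-- `ε_a` (for the 0-based index `i`, paper index `i+1`): `+1` for `B_n, D_n`; for `C_n`
it is `+1` for paper index `≤ n` and `−1` for paper index `> n`. -/
def epsA (S : BCDSeries) (n i : ℕ) : ℂ :=
  match S with
  | BCDSeries.C => if i < n then 1 else -1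
  | _ => 1

/-- `2·ρ_a ∈ ℤ` for the 0-based index `i` (paper index `i+1`); `ρ` is the vector
`(N/2−1, …, 1/2, 0, −1/2, …, −N/2+1)` for `B_n`, `(N/2, …, 1, −1, …, −N/2)` for `C_n`,
and `(N/2−1, …, 1, 0, 0, −1, …, −N/2+1)` for `D_n`. -/
def twoRho (S : BCDSeries) (n i : ℕ) : ℤ :=
  match S with
  | BCDSeries.B =>
      if i < n then (2 * n + 1 : ℤ) - 2 * (i + 1)
      else if i = n then 0
      else (2 * n + 3 : ℤ) - 2 * (i + 1)
  | BCDSeries.C =>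
      if i < n then (2 * n + 2 : ℤ) - 2 * (i + 1) else (2 * n : ℤ) - 2 * (i + 1)
  | BCDSeries.D =>
      if i < n then (2 * n : ℤ) - 2 * (i + 1) else (2 * n + 2 : ℤ) - 2 * (i + 1)

/-- `δ^{a n₂}` as a complex number: for `B_n` it is 1 iff the 0-based index `i` equals `n`
(paper index `n₂ = (N+1)/2 = n+1`); for `C_n, D_n` there is no index `n₂` and it is 0. -/
def isN2 (S : BCDSeries) (n i : ℕ) : ℂ :=
  match S with
  | BCDSeries.B => if i = n then 1 else 0
  | _ => 0

/-- The primed index `a' = N+1−a` (in 0-based indexing, `a' = N−1−a`). -/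
def pr {N : ℕ} (a : Fin N) : Fin N := ⟨N - 1 - a.val, by have := a.isLt; omega⟩

/-- The metric `C_{ab} = ε_a r^{−ρ_a} δ_{a b'}`, where `r^ρ := s^{2ρ}` for a fixed square
root `s` of `r`. -/
noncomputable def Cmet (S : BCDSeries) (n : ℕ) (s : ℂ)
    (a b : Fin (bigN S n)) : ℂ :=
  epsA S n a.val * s ^ (-(twoRho S n a.val)) * kd b (pr a)

/-- The inverse metric `C^{ab} = ε C_{ab}`. -/
noncomputable def Cup (S : BCDSeries) (n : ℕ) (s : ℂ)
    (a b : Fin (bigN S n)) : ℂ :=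
  epsC S * Cmet S n s a b

/-- The multiparametric `B,C,D` R-matrix
`R^{ab}_{cd} = δ^a_c δ^b_d [r/q_{ab} + (r−1)δ^{ab} + (r⁻¹−1)δ^{a b'}](1−δ^{a n₂})
  + δ^a_{n₂} δ^b_{n₂} δ^{n₂}_c δ^{n₂}_d
  + (r−r⁻¹)[θ^{ab} δ^b_c δ^a_d − ε_a ε_c θ^{ac} r^{ρ_a−ρ_c} δ^{a'b} δ_{c'd}]`,
with `θ^{ab} = 1` iff `a > b`, and `r^ρ := s^{2ρ}`.  Indices are 0-based. -/
noncomputable def Rbcd (S : BCDSeries) (n : ℕ) (r s : ℂ)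
    (q : Fin (bigN S n) → Fin (bigN S n) → ℂ)
    (a b c d : Fin (bigN S n)) : ℂ :=
  kd a c * kd b d *
      (r / q a b + (r - 1) * kd a b + (r⁻¹ - 1) * kd b (pr a)) * (1 - isN2 S n a.val)
    + isN2 S n a.val * isN2 S n b.val * isN2 S n c.val * isN2 S n d.val
    + (r - r⁻¹) *
        ((if b < a then (1 : ℂ) else 0) * kd b c * kd a d
          - epsA S n a.val * epsA S n c.val * (if c < a then (1 : ℂ) else 0) *
              s ^ (twoRho S n a.val - twoRho S n c.val) * kd b (pr a) * kd d (pr c))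

/-- `R̂^{ab}_{cd} := R^{ba}_{cd}`. -/
noncomputable def RbcdHat (S : BCDSeries) (n : ℕ) (r s : ℂ)
    (q : Fin (bigN S n) → Fin (bigN S n) → ℂ)
    (a b c d : Fin (bigN S n)) : ℂ :=
  Rbcd S n r s q b a c d

/-- The R-matrix with all deformation parameters inverted, `R_{q⁻¹,r⁻¹}` (also the chosen
square root `s` of `r` is replaced by `s⁻¹`). -/
noncomputable def RbcdInv (S : BCDSeries) (n : ℕ) (r s : ℂ)
    (q : Fin (bigN S n) → Fin (bigN S n) → ℂ)
    (a b c d : Fin (bigN S n)) : ℂ :=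
  Rbcd S n r⁻¹ s⁻¹ (fun x y => (q x y)⁻¹) a b c d

/-- The entries of the matrix `𝒟` (0-based indices `i, j`): for `B_n` it is the diagonal
matrix with entry `−1` in position `n₂` (paper index `n+1`, 0-based `n`) and `+1`
elsewhere; for `D_n` it is the permutation matrix exchanging the indices `n` and `n+1`
(0-based `n−1` and `n`) and fixing all others.  (The `C_n` branch, which is never used,
is set to the identity.) -/
noncomputable def DmatE (S : BCDSeries) (n i j : ℕ) : ℂ :=
  match S with
  | BCDSeries.B => if i = j then (if i = n then -1 else 1) else 0
  | BCDSeries.C => if i = j then 1 else 0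
  | BCDSeries.D =>
      if i = n - 1 then (if j = n then 1 else 0)
      else if i = n then (if j = n - 1 then 1 else 0)
      else if i = j then 1 else 0

/-- The matrix `𝒟` on `Fin (bigN S n)`. -/
noncomputable def Dmat (S : BCDSeries) (n : ℕ) (a b : Fin (bigN S n)) : ℂ :=
  DmatE S n a.val b.val

namespace St6

lemma kd_self {α : Type*} [DecidableEq α] (a : α) : kd a a = 1 := by simp [kd]

lemma kd_ne {α : Type*} [DecidableEq α] {a b : α} (h : a ≠ b) : kd a b = 0 := by
  simp [kd, h]

lemma conj_kd {α : Type*} [DecidableEq α] (a b : α) :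
    (starRingEnd ℂ) (kd a b) = kd a b := by
  unfold kd; split <;> simp

lemma conj_ite (p : Prop) [Decidable p] :
    (starRingEnd ℂ) (if p then (1 : ℂ) else 0) = if p then 1 else 0 := by
  split <;> simp

lemma conj_eq_inv {z : ℂ} (h : ‖z‖ = 1) : (starRingEnd ℂ) z = z⁻¹ := by
  have h1 : (starRingEnd ℂ) z * z = 1 := by
    rw [mul_comm, Complex.mul_conj, Complex.normSq_eq_norm_sq, h]
    norm_num
  exact eq_inv_of_mul_eq_one_left h1

lemma isN2_D (n i : ℕ) : isN2 BCDSeries.D n i = 0 := rfl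

lemma epsA_D (n i : ℕ) : epsA BCDSeries.D n i = 1 := rfl

lemma twoRho_D (n i : ℕ) : twoRho BCDSeries.D n i =
    if i < n then (2 * n : ℤ) - 2 * (i + 1) else (2 * n + 2 : ℤ) - 2 * (i + 1) := rfl

lemma bigN_D (n : ℕ) : bigN BCDSeries.D n = 2 * n := rfl

/-- The permutation of `Fin (2n)` exchanging the (0-based) indices `n-1` and `n`. -/
def sig (n : ℕ) (a : Fin (bigN BCDSeries.D n)) : Fin (bigN BCDSeries.D n) :=
  if a.val = n - 1 then
    ⟨n, by have h : a.val < 2 * n := a.isLt; show n < 2 * n; omega⟩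
  else if a.val = n then
    ⟨n - 1, by have h : a.val < 2 * n := a.isLt; show n - 1 < 2 * n; omega⟩
  else a

lemma sig_val (n : ℕ) (a : Fin (bigN BCDSeries.D n)) :
    (sig n a).val = if a.val = n - 1 then n else if a.val = n then n - 1 else a.val := by
  unfold sig; split_ifs <;> rfl

lemma pr_val {N : ℕ} (a : Fin N) : (pr a).val = N - 1 - a.val := rfl

lemma pr_pr {N : ℕ} (a : Fin N) : pr (pr a) = a := by
  have := a.isLt
  apply Fin.ext
  rw [pr_val, pr_val]
  omega

lemma sig_sig (n : ℕ) (a : Fin (bigN BCDSeries.D n)) : sig n (sig n a) = a := by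
  have ha : a.val < 2 * n := lt_of_lt_of_eq a.isLt (bigN_D n)
  apply Fin.ext
  rw [sig_val, sig_val]
  split_ifs <;> omega

lemma sig_eq_iff (n : ℕ) (x y : Fin (bigN BCDSeries.D n)) :
    sig n x = sig n y ↔ x = y :=
  ⟨fun h => by rw [← sig_sig n x, h, sig_sig], fun h => by rw [h]⟩

lemma kd_sig (n : ℕ) (x y : Fin (bigN BCDSeries.D n)) :
    kd (sig n x) (sig n y) = kd x y := by
  unfold kd
  rw [if_congr (sig_eq_iff n x y) rfl rfl]

lemma pr_sig (n : ℕ) (a : Fin (bigN BCDSeries.D n)) : pr (sig n a) = sig n (pr a) := by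
  have ha : a.val < 2 * n := lt_of_lt_of_eq a.isLt (bigN_D n)
  apply Fin.ext
  have hN := bigN_D n
  rw [pr_val, sig_val, sig_val, pr_val]
  split_ifs <;> omega

lemma twoRho_sig (n : ℕ) (a : Fin (bigN BCDSeries.D n)) :
    twoRho BCDSeries.D n (sig n a).val = twoRho BCDSeries.D n a.val := by
  have ha : a.val < 2 * n := lt_of_lt_of_eq a.isLt (bigN_D n)
  rw [twoRho_D, twoRho_D, sig_val]
  split_ifs <;> omega

lemma sig_lt (n : ℕ) (x y : Fin (bigN BCDSeries.D n))
    (h1 : ¬(x.val = n ∧ y.val = n - 1)) (h2 : ¬(x.val = n - 1 ∧ y.val = n)) :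
    sig n y < sig n x ↔ y < x := by
  have hx : x.val < 2 * n := lt_of_lt_of_eq x.isLt (bigN_D n)
  have hy : y.val < 2 * n := lt_of_lt_of_eq y.isLt (bigN_D n)
  rw [Fin.lt_def, Fin.lt_def, sig_val, sig_val]
  split_ifs <;> omega

lemma Dmat_left (n : ℕ) (x y : Fin (bigN BCDSeries.D n)) :
    Dmat BCDSeries.D n x y = kd y (sig n x) := by
  have hx : x.val < 2 * n := lt_of_lt_of_eq x.isLt (bigN_D n)
  have hy : y.val < 2 * n := lt_of_lt_of_eq y.isLt (bigN_D n)
  unfold Dmat DmatE kd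
  simp only [Fin.ext_iff, sig_val]
  split_ifs <;> first | rfl | (exfalso; omega)

lemma Dmat_right (n : ℕ) (x y : Fin (bigN BCDSeries.D n)) :
    Dmat BCDSeries.D n x y = kd x (sig n y) := by
  have hx : x.val < 2 * n := lt_of_lt_of_eq x.isLt (bigN_D n)
  have hy : y.val < 2 * n := lt_of_lt_of_eq y.isLt (bigN_D n)
  unfold Dmat DmatE kd
  simp only [Fin.ext_iff, sig_val]
  split_ifs <;> first | rfl | (exfalso; omega)

lemma sum_kd_mul {N : ℕ} (x : Fin N) (G : Fin N → ℂ) :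
    (∑ e, kd e x * G e) = G x := by
  rw [Finset.sum_eq_single x]
  · rw [kd_self, one_mul]
  · intro b _ hb
    rw [kd_ne hb, zero_mul]
  · intro h
    exact absurd (Finset.mem_univ x) h

end St6

/-- for the orthogonal series `D_n` (N = 2n), assuming `|r| = 1`,
`|q_{ab}| = 1` whenever `a` and `b` are both different from `n` and `n+1`, and
`q_{ab}/r ∈ ℝ` whenever at least one of `a, b` equals `n` or `n+1` (paper indices;
0-based `n−1` and `n`), the permutation matrix `𝒟` exchanging the indices `n` and `n+1`
satisfies `(𝒟 ⊗ 𝒟) R (𝒟 ⊗ 𝒟) = conj(R⁻¹)`, where `R⁻¹ = R_{q⁻¹,r⁻¹}` is the matrix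
inverse of `R` and `conj` is entrywise complex conjugation. -/
theorem statement6 (n : ℕ) (r s : ℂ) (hr : r ≠ 0) (hs : s ^ 2 = r)
    (habsr : ‖r‖ = 1)
    (q : Fin (bigN BCDSeries.D n) → Fin (bigN BCDSeries.D n) → ℂ)
    (hq0 : ∀ a b, q a b ≠ 0)
    (hqaa : ∀ a, q a a = r)
    (hqsym : ∀ a b, q b a * q a b = r ^ 2)
    (hqpr1 : ∀ a b, q a b * q a (pr b) = r ^ 2)
    (hqpr2 : ∀ a b, q a b * q (pr a) b = r ^ 2)
    (hqpr3 : ∀ a b, q a b = q (pr a) (pr b))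
    (hqabs : ∀ a b : Fin (bigN BCDSeries.D n),
      a.val ≠ n - 1 → a.val ≠ n → b.val ≠ n - 1 → b.val ≠ n → ‖q a b‖ = 1)
    (hqreal : ∀ a b : Fin (bigN BCDSeries.D n),
      (a.val = n - 1 ∨ a.val = n ∨ b.val = n - 1 ∨ b.val = n) → (q a b / r).im = 0) :
    ∀ a b c d : Fin (bigN BCDSeries.D n),
      (∑ e : Fin (bigN BCDSeries.D n), ∑ f : Fin (bigN BCDSeries.D n),
       ∑ g : Fin (bigN BCDSeries.D n), ∑ h : Fin (bigN BCDSeries.D n),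
          Dmat BCDSeries.D n a e * Dmat BCDSeries.D n b f *
            Rbcd BCDSeries.D n r s q e f g h *
            Dmat BCDSeries.D n g c * Dmat BCDSeries.D n h d)
        = (starRingEnd ℂ) (RbcdInv BCDSeries.D n r s q a b c d) := by
  intro a b c d
  have hN : bigN BCDSeries.D n = 2 * n := rfl
  have ha : a.val < 2 * n := lt_of_lt_of_eq a.isLt hN
  have hb : b.val < 2 * n := lt_of_lt_of_eq b.isLt hN
  have hc : c.val < 2 * n := lt_of_lt_of_eq c.isLt hN
  have hd : d.val < 2 * n := lt_of_lt_of_eq d.isLt hN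
  have hpr : ∀ x : Fin (bigN BCDSeries.D n), (pr x).val = 2 * n - 1 - x.val := by
    intro x
    rfl
  -- conjugation facts
  have hcr : (starRingEnd ℂ) r = r⁻¹ := St6.conj_eq_inv habsr
  have habss : ‖s‖ = 1 := by
    have h1 : ‖s‖ ^ 2 = 1 := by rw [← norm_pow, hs, habsr]
    nlinarith [norm_nonneg s]
  have hcs : (starRingEnd ℂ) s = s⁻¹ := St6.conj_eq_inv habss
  -- collapse of the quadruple sum
  have hcol : (∑ e : Fin (bigN BCDSeries.D n), ∑ f : Fin (bigN BCDSeries.D n),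
       ∑ g : Fin (bigN BCDSeries.D n), ∑ h : Fin (bigN BCDSeries.D n),
          Dmat BCDSeries.D n a e * Dmat BCDSeries.D n b f *
            Rbcd BCDSeries.D n r s q e f g h *
            Dmat BCDSeries.D n g c * Dmat BCDSeries.D n h d)
      = Rbcd BCDSeries.D n r s q (St6.sig n a) (St6.sig n b) (St6.sig n c) (St6.sig n d) := by
    have s4 : ∀ e f g, (∑ h : Fin (bigN BCDSeries.D n),
        Dmat BCDSeries.D n a e * Dmat BCDSeries.D n b f *
          Rbcd BCDSeries.D n r s q e f g h * Dmat BCDSeries.D n g c *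
          Dmat BCDSeries.D n h d)
        = Dmat BCDSeries.D n a e * Dmat BCDSeries.D n b f *
            Rbcd BCDSeries.D n r s q e f g (St6.sig n d) * Dmat BCDSeries.D n g c := by
      intro e f g
      calc (∑ h : Fin (bigN BCDSeries.D n),
          Dmat BCDSeries.D n a e * Dmat BCDSeries.D n b f *
            Rbcd BCDSeries.D n r s q e f g h * Dmat BCDSeries.D n g c *
            Dmat BCDSeries.D n h d)
          = ∑ h : Fin (bigN BCDSeries.D n), kd h (St6.sig n d) *
              (Dmat BCDSeries.D n a e * Dmat BCDSeries.D n b f *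
                Rbcd BCDSeries.D n r s q e f g h * Dmat BCDSeries.D n g c) := by
            refine Finset.sum_congr rfl fun h _ => ?_
            rw [St6.Dmat_right n h d]
            ring
        _ = _ := St6.sum_kd_mul _ _
    have s3 : ∀ e f, (∑ g : Fin (bigN BCDSeries.D n),
        Dmat BCDSeries.D n a e * Dmat BCDSeries.D n b f *
          Rbcd BCDSeries.D n r s q e f g (St6.sig n d) * Dmat BCDSeries.D n g c)
        = Dmat BCDSeries.D n a e * Dmat BCDSeries.D n b f *
            Rbcd BCDSeries.D n r s q e f (St6.sig n c) (St6.sig n d) := by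
      intro e f
      calc (∑ g : Fin (bigN BCDSeries.D n),
          Dmat BCDSeries.D n a e * Dmat BCDSeries.D n b f *
            Rbcd BCDSeries.D n r s q e f g (St6.sig n d) * Dmat BCDSeries.D n g c)
          = ∑ g : Fin (bigN BCDSeries.D n), kd g (St6.sig n c) *
              (Dmat BCDSeries.D n a e * Dmat BCDSeries.D n b f *
                Rbcd BCDSeries.D n r s q e f g (St6.sig n d)) := by
            refine Finset.sum_congr rfl fun g _ => ?_
            rw [St6.Dmat_right n g c]
            ring
        _ = _ := St6.sum_kd_mul _ _
    have s2 : ∀ e, (∑ f : Fin (bigN BCDSeries.D n),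
        Dmat BCDSeries.D n a e * Dmat BCDSeries.D n b f *
          Rbcd BCDSeries.D n r s q e f (St6.sig n c) (St6.sig n d))
        = Dmat BCDSeries.D n a e *
            Rbcd BCDSeries.D n r s q e (St6.sig n b) (St6.sig n c) (St6.sig n d) := by
      intro e
      calc (∑ f : Fin (bigN BCDSeries.D n),
          Dmat BCDSeries.D n a e * Dmat BCDSeries.D n b f *
            Rbcd BCDSeries.D n r s q e f (St6.sig n c) (St6.sig n d))
          = ∑ f : Fin (bigN BCDSeries.D n), kd f (St6.sig n b) *
              (Dmat BCDSeries.D n a e *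
                Rbcd BCDSeries.D n r s q e f (St6.sig n c) (St6.sig n d)) := by
            refine Finset.sum_congr rfl fun f _ => ?_
            rw [St6.Dmat_left n b f]
            ring
        _ = _ := St6.sum_kd_mul _ _
    have s1 : (∑ e : Fin (bigN BCDSeries.D n),
        Dmat BCDSeries.D n a e *
          Rbcd BCDSeries.D n r s q e (St6.sig n b) (St6.sig n c) (St6.sig n d))
        = Rbcd BCDSeries.D n r s q (St6.sig n a) (St6.sig n b) (St6.sig n c)
            (St6.sig n d) := by
      calc (∑ e : Fin (bigN BCDSeries.D n),
          Dmat BCDSeries.D n a e *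
            Rbcd BCDSeries.D n r s q e (St6.sig n b) (St6.sig n c) (St6.sig n d))
          = ∑ e : Fin (bigN BCDSeries.D n), kd e (St6.sig n a) *
              Rbcd BCDSeries.D n r s q e (St6.sig n b) (St6.sig n c) (St6.sig n d) := by
            refine Finset.sum_congr rfl fun e _ => ?_
            rw [St6.Dmat_left n a e]
        _ = _ := St6.sum_kd_mul _ _
    simp only [s4, s3, s2]
    exact s1
  -- the key fact about q
  have key : (starRingEnd ℂ) (q a b) * q (St6.sig n a) (St6.sig n b) = 1 := by
    by_cases hA : a.val ≠ n - 1 ∧ a.val ≠ n ∧ b.val ≠ n - 1 ∧ b.val ≠ n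
    · obtain ⟨h1, h2, h3, h4⟩ := hA
      have hsa : St6.sig n a = a := Fin.ext (by rw [St6.sig_val, if_neg h1, if_neg h2])
      have hsb : St6.sig n b = b := Fin.ext (by rw [St6.sig_val, if_neg h3, if_neg h4])
      rw [hsa, hsb, mul_comm, Complex.mul_conj, Complex.normSq_eq_norm_sq,
        hqabs a b h1 h2 h3 h4]
      norm_num
    · have hor : a.val = n - 1 ∨ a.val = n ∨ b.val = n - 1 ∨ b.val = n := by tauto
      have hrim := hqreal a b hor
      have hconjq : (starRingEnd ℂ) (q a b) = q a b * (r ^ 2)⁻¹ := by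
        have h1 : (starRingEnd ℂ) (q a b / r) = q a b / r :=
          Complex.conj_eq_iff_im.mpr hrim
        have h2 : (starRingEnd ℂ) (q a b) = (starRingEnd ℂ) (q a b / r * r) := by
          rw [div_mul_cancel₀ _ hr]
        rw [h2, map_mul, h1, hcr, div_eq_mul_inv, sq, mul_inv]
        ring
      have hq2 : q a b * q (St6.sig n a) (St6.sig n b) = r ^ 2 := by
        by_cases haS : a.val = n - 1 ∨ a.val = n
        · have hsa : St6.sig n a = pr a := by
            apply Fin.ext
            rw [St6.sig_val, hpr]
            split_ifs <;> omega
          by_cases hbS : b.val = n - 1 ∨ b.val = n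
          · have hsb : St6.sig n b = pr b := by
              apply Fin.ext
              rw [St6.sig_val, hpr]
              split_ifs <;> omega
            rw [hsa, hsb, ← hqpr3]
            by_cases hab : a = b
            · rw [← hab, hqaa]
              ring
            · have hbpa : b = pr a := by
                apply Fin.ext
                rw [hpr]
                have hne : a.val ≠ b.val := fun h => hab (Fin.ext h)
                omega
              have h3 : q a (pr a) = r := by
                have h4 := hqpr1 a a
                rw [hqaa] at h4
                exact mul_left_cancel₀ hr (by rw [h4]; ring)
              rw [hbpa, h3]
              ring
          · push_neg at hbS
            have hsb : St6.sig n b = b :=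
              Fin.ext (by rw [St6.sig_val, if_neg hbS.1, if_neg hbS.2])
            rw [hsa, hsb]
            exact hqpr2 a b
        · push_neg at haS
          have hsa : St6.sig n a = a :=
            Fin.ext (by rw [St6.sig_val, if_neg haS.1, if_neg haS.2])
          have hbS : b.val = n - 1 ∨ b.val = n := by tauto
          have hsb : St6.sig n b = pr b := by
            apply Fin.ext
            rw [St6.sig_val, hpr]
            split_ifs <;> omega
          rw [hsa, hsb]
          exact hqpr1 a b
      rw [hconjq]
      calc q a b * (r ^ 2)⁻¹ * q (St6.sig n a) (St6.sig n b)
          = q a b * q (St6.sig n a) (St6.sig n b) * (r ^ 2)⁻¹ := by ring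
        _ = 1 := by rw [hq2]; exact mul_inv_cancel₀ (pow_ne_zero 2 hr)
  have hq1 : r / q (St6.sig n a) (St6.sig n b) = r * (starRingEnd ℂ) (q a b) := by
    rw [div_eq_mul_inv]
    congr 1
    exact (eq_inv_of_mul_eq_one_left key).symm
  -- the off-diagonal identity
  have hoff : (if St6.sig n b < St6.sig n a then (1 : ℂ) else 0) * kd b c * kd a d -
      (if St6.sig n c < St6.sig n a then (1 : ℂ) else 0) *
        s ^ (twoRho BCDSeries.D n a.val - twoRho BCDSeries.D n c.val) *
        kd b (pr a) * kd d (pr c)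
      = (if b < a then (1 : ℂ) else 0) * kd b c * kd a d -
      (if c < a then (1 : ℂ) else 0) *
        s ^ (twoRho BCDSeries.D n a.val - twoRho BCDSeries.D n c.val) *
        kd b (pr a) * kd d (pr c) := by
    by_cases hE1 : (a.val = n ∧ b.val = n - 1) ∨ (a.val = n - 1 ∧ b.val = n)
    · have hba : b = pr a := by
        apply Fin.ext
        rw [hpr]
        omega
      by_cases hbc : b = c
      · by_cases had : a = d
        · have hz : twoRho BCDSeries.D n a.val - twoRho BCDSeries.D n c.val = 0 := by
            have hcv : c.val = b.val := by rw [hbc]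
            rw [St6.twoRho_D, St6.twoRho_D]
            split_ifs <;> omega
          rw [hz, zpow_zero]
          have h1 : kd b c = 1 := by rw [hbc, St6.kd_self]
          have h2 : kd a d = 1 := by rw [had, St6.kd_self]
          have h3 : kd b (pr a) = 1 := by rw [hba, St6.kd_self]
          have h4 : kd d (pr c) = 1 := by
            have h5 : pr c = d := by rw [← hbc, hba, St6.pr_pr, had]
            rw [h5, St6.kd_self]
          have h6 : (if St6.sig n c < St6.sig n a then (1 : ℂ) else 0)
              = (if St6.sig n b < St6.sig n a then (1 : ℂ) else 0) := by rw [hbc]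
          have h7 : (if c < a then (1 : ℂ) else 0) = (if b < a then (1 : ℂ) else 0) := by
            rw [hbc]
          rw [h1, h2, h3, h4, h6, h7]
          ring
        · have h2 : kd a d = 0 := St6.kd_ne had
          have h4 : kd d (pr c) = 0 := by
            apply St6.kd_ne
            intro h
            apply had
            rw [h, ← hbc, hba, St6.pr_pr]
          rw [h2, h4]
          ring
      · have h1 : kd b c = 0 := St6.kd_ne hbc
        have hE2 : ¬((a.val = n ∧ c.val = n - 1) ∨ (a.val = n - 1 ∧ c.val = n)) := by
          intro h
          exact hbc (Fin.ext (by omega))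
        have h6 : (if St6.sig n c < St6.sig n a then (1 : ℂ) else 0)
            = (if c < a then (1 : ℂ) else 0) :=
          if_congr (St6.sig_lt n a c (fun h => hE2 (Or.inl h)) (fun h => hE2 (Or.inr h)))
            rfl rfl
        rw [h1, h6]
        ring
    · have h5 : (if St6.sig n b < St6.sig n a then (1 : ℂ) else 0)
          = (if b < a then (1 : ℂ) else 0) :=
        if_congr (St6.sig_lt n a b (fun h => hE1 (Or.inl h)) (fun h => hE1 (Or.inr h)))
          rfl rfl
      rw [h5]
      by_cases hE2 : (a.val = n ∧ c.val = n - 1) ∨ (a.val = n - 1 ∧ c.val = n)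
      · have h3 : kd b (pr a) = 0 := by
          apply St6.kd_ne
          intro h
          have hbv : b.val = 2 * n - 1 - a.val := by rw [h, hpr]
          exact hE1 (by omega)
        rw [h3]
        ring
      · have h6 : (if St6.sig n c < St6.sig n a then (1 : ℂ) else 0)
            = (if c < a then (1 : ℂ) else 0) :=
          if_congr (St6.sig_lt n a c (fun h => hE2 (Or.inl h)) (fun h => hE2 (Or.inr h)))
            rfl rfl
        rw [h6]
  -- the two sides, brought to a common normal form
  have hL : Rbcd BCDSeries.D n r s q (St6.sig n a) (St6.sig n b) (St6.sig n c)
      (St6.sig n d)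
      = kd a c * kd b d * (r * (starRingEnd ℂ) (q a b) + (r - 1) * kd a b +
          (r⁻¹ - 1) * kd b (pr a))
        + (r - r⁻¹) * ((if b < a then (1 : ℂ) else 0) * kd b c * kd a d -
            (if c < a then (1 : ℂ) else 0) *
              s ^ (twoRho BCDSeries.D n a.val - twoRho BCDSeries.D n c.val) *
              kd b (pr a) * kd d (pr c)) := by
    unfold Rbcd
    simp only [St6.pr_sig, St6.kd_sig, St6.twoRho_sig, St6.isN2_D, St6.epsA_D,
      one_mul, mul_one, mul_zero, zero_mul, add_zero, sub_zero]
    rw [hq1, hoff]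
  have hR : (starRingEnd ℂ) (RbcdInv BCDSeries.D n r s q a b c d)
      = kd a c * kd b d * (r * (starRingEnd ℂ) (q a b) + (r - 1) * kd a b +
          (r⁻¹ - 1) * kd b (pr a))
        + (r - r⁻¹) * ((if b < a then (1 : ℂ) else 0) * kd b c * kd a d -
            (if c < a then (1 : ℂ) else 0) *
              s ^ (twoRho BCDSeries.D n a.val - twoRho BCDSeries.D n c.val) *
              kd b (pr a) * kd d (pr c)) := by
    unfold RbcdInv Rbcd
    simp only [St6.isN2_D, St6.epsA_D, one_mul, mul_one, mul_zero, zero_mul,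
      add_zero, sub_zero, inv_inv, map_add, map_sub, map_mul, map_div₀, map_inv₀,
      map_one, map_zpow₀, St6.conj_kd, St6.conj_ite, hcr, hcs, div_inv_eq_mul]
  rw [hcol, hL]
  exact hR.symm
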